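/- Lower bound on the Whittle index of busy states: for every integer τ ≥ 1 and every integer b ≥ 1, the Whittle index satisfies ω(τ,b) ≥ E; equivalently, for every subsidy δ < E the active (offloading) action is strictly optimal at every state with at least one remaining subtask. -/
import Mathlib


noncomputable def F (α : ℝ) (x : ℕ) : ℝ := α * (x : ℝ) ^ 2

noncomputable def V (k : ℕ) (E α β δ : ℝ) : ℕ → ℕ → ℝ
  | 0, _ => 0
  | 1, 0 => max δ 0
  | 1, b + 1 => max (δ - F α b) (E - F α (b + 1 - k))
  | t + 2, b =>
      max (δ + β * V k E α β δ (t + 1) (b - 1))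
        ((if 1 ≤ b then E else 0) + β * V k E α β δ (t + 1) (b - k))

noncomputable def g (k : ℕ) (E α β δ : ℝ) : ℕ → ℕ → ℝ
  | 0, _ => 0
  | 1, 0 => δ
  | 1, b + 1 => δ - F α b - E + F α (b + 1 - k)
  | t + 2, b =>
      δ + β * V k E α β δ (t + 1) (b - 1) - (if 1 ≤ b then E else 0)
        - β * V k E α β δ (t + 1) (b - k)

noncomputable def whittle (k : ℕ) (E α β : ℝ) (τ b : ℕ) : ℝ :=
  sInf {δ : ℝ | 0 ≤ g k E α β δ τ b}

lemma F_nonneg {α : ℝ} (hα : 0 ≤ α) (x : ℕ) : 0 ≤ F α x := by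
  unfold F; positivity

lemma F_mono {α : ℝ} (hα : 0 ≤ α) {a b : ℕ} (h : a ≤ b) : F α a ≤ F α b := by
  unfold F
  have h1 : (a : ℝ) ≤ b := by exact_mod_cast h
  have h0 : (0 : ℝ) ≤ a := Nat.cast_nonneg a
  have hsq : (a : ℝ) ^ 2 ≤ (b : ℝ) ^ 2 := by nlinarith
  exact mul_le_mul_of_nonneg_left hsq hα

lemma V_eq2 (k : ℕ) (E α β δ : ℝ) (t b : ℕ) :
    V k E α β δ (t+2) b = max (δ + β * V k E α β δ (t + 1) (b - 1))
      ((if 1 ≤ b then E else 0) + β * V k E α β δ (t + 1) (b - k)) := rfl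

lemma V_eq1 (k : ℕ) (E α β δ : ℝ) (b : ℕ) :
    V k E α β δ 1 (b+1) = max (δ - F α b) (E - F α (b + 1 - k)) := rfl

lemma V_eq10 (k : ℕ) (E α β δ : ℝ) : V k E α β δ 1 0 = max δ 0 := rfl

/-- Upward gap lemma: if `b` exceeds `c` by at most `k`, the value at `b` exceeds
the value at `c` by at most `E - δ` (when `δ ≤ E`). -/
lemma V_gap (k : ℕ) (E α β δ : ℝ) (hα : 0 ≤ α) (hβ0 : 0 ≤ β) (hβ1 : β ≤ 1)
    (hδ : δ ≤ E) :
    ∀ τ b c : ℕ, c ≤ b → b ≤ c + k → V k E α β δ τ b ≤ V k E α β δ τ c + (E - δ) := by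
  intro τ
  induction τ with
  | zero => intro b c _ _; show (0:ℝ) ≤ 0 + (E - δ); linarith
  | succ t ih =>
    match t, ih with
    | 0, _ =>
      intro b c hcb hbck
      have hEδ : (0:ℝ) ≤ E - δ := by linarith
      cases b with
      | zero =>
        obtain rfl : c = 0 := Nat.le_zero.mp hcb
        linarith
      | succ n =>
        cases c with
        | zero =>
          rw [V_eq1, V_eq10]
          have h1 := F_nonneg hα n
          have h2 := F_nonneg hα (n + 1 - k)
          have h3 := le_max_left δ (0:ℝ)
          apply max_le <;> linarith
        | succ m =>
          rw [V_eq1, V_eq1]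
          have h1 : F α m ≤ F α n := F_mono hα (by omega)
          have h2 : F α (m+1-k) ≤ F α (n+1-k) := F_mono hα (by omega)
          have h3 := le_max_left (δ - F α m) (E - F α (m + 1 - k))
          have h4 := le_max_right (δ - F α m) (E - F α (m + 1 - k))
          apply max_le <;> linarith
    | t+1, ih =>
      intro b c hcb hbck
      have hEδ : (0:ℝ) ≤ E - δ := by linarith
      cases b with
      | zero =>
        obtain rfl : c = 0 := Nat.le_zero.mp hcb
        linarith
      | succ n =>
        cases c with
        | zero =>
          rw [V_eq2, V_eq2, if_pos (show 1 ≤ n+1 by omega),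
            if_neg (show ¬ (1:ℕ) ≤ 0 by omega)]
          simp only [Nat.add_sub_cancel, Nat.zero_sub]
          have hnk : n + 1 - k = 0 := by omega
          rw [hnk]
          have hIH : V k E α β δ (t+1) n ≤ V k E α β δ (t+1) 0 + (E - δ) :=
            ih n 0 (Nat.zero_le n) (by omega)
          have hmul := mul_le_mul_of_nonneg_left hIH hβ0
          rw [mul_add] at hmul
          have hbe : β * (E - δ) ≤ 1 * (E - δ) := mul_le_mul_of_nonneg_right hβ1 hEδ
          have h3 := le_max_left (δ + β * V k E α β δ (t+1) 0)
            (0 + β * V k E α β δ (t+1) 0)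
          apply max_le <;> linarith
        | succ m =>
          rw [V_eq2, V_eq2, if_pos (show 1 ≤ n+1 by omega),
            if_pos (show 1 ≤ m+1 by omega)]
          simp only [Nat.add_sub_cancel]
          have hIH1 : V k E α β δ (t+1) n ≤ V k E α β δ (t+1) m + (E - δ) :=
            ih n m (by omega) (by omega)
          have hIH2 : V k E α β δ (t+1) (n+1-k) ≤ V k E α β δ (t+1) (m+1-k) + (E - δ) :=
            ih (n+1-k) (m+1-k) (by omega) (by omega)
          have hmul1 := mul_le_mul_of_nonneg_left hIH1 hβ0
          have hmul2 := mul_le_mul_of_nonneg_left hIH2 hβ0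
          rw [mul_add] at hmul1 hmul2
          have hbe : β * (E - δ) ≤ 1 * (E - δ) := mul_le_mul_of_nonneg_right hβ1 hEδ
          have h3 := le_max_left (δ + β * V k E α β δ (t+1) m)
            (E + β * V k E α β δ (t+1) (m+1-k))
          have h4 := le_max_right (δ + β * V k E α β δ (t+1) m)
            (E + β * V k E α β δ (t+1) (m+1-k))
          apply max_le <;> linarith

/-- Downward gap lemma: having fewer remaining subtasks helps by at most `F α b`. -/
lemma V_down (k : ℕ) (E α β δ : ℝ) (hE : 0 ≤ E) (hα : 0 ≤ α) (hβ0 : 0 ≤ β) (hβ1 : β ≤ 1) :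
    ∀ τ b c : ℕ, c ≤ b → V k E α β δ τ c ≤ V k E α β δ τ b + F α b := by
  intro τ
  induction τ with
  | zero => intro b c _; show (0:ℝ) ≤ 0 + F α b; have := F_nonneg hα b; linarith
  | succ t ih =>
    match t, ih with
    | 0, _ =>
      intro b c hcb
      cases b with
      | zero =>
        obtain rfl : c = 0 := Nat.le_zero.mp hcb
        have := F_nonneg hα 0; linarith
      | succ n =>
        have hF := F_nonneg hα (n+1)
        have h1 : F α n ≤ F α (n+1) := F_mono hα (by omega)
        have h2 : F α (n+1-k) ≤ F α (n+1) := F_mono hα (by omega)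
        have h3 := le_max_left (δ - F α n) (E - F α (n + 1 - k))
        have h4 := le_max_right (δ - F α n) (E - F α (n + 1 - k))
        cases c with
        | zero =>
          rw [V_eq1, V_eq10]
          apply max_le <;> linarith
        | succ m =>
          rw [V_eq1, V_eq1]
          have h5 := F_nonneg hα m
          have h6 := F_nonneg hα (m+1-k)
          apply max_le <;> linarith
    | t+1, ih =>
      intro b c hcb
      cases b with
      | zero =>
        obtain rfl : c = 0 := Nat.le_zero.mp hcb
        have := F_nonneg hα 0; linarith
      | succ n =>
        have hF := F_nonneg hα (n+1)
        have h1 : F α n ≤ F α (n+1) := F_mono hα (by omega)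
        have h2 : F α (n+1-k) ≤ F α (n+1) := F_mono hα (by omega)
        have hIH1 : V k E α β δ (t+1) (c-1) ≤ V k E α β δ (t+1) n + F α n :=
          ih n (c-1) (by omega)
        have hIH2 : V k E α β δ (t+1) (c-k) ≤ V k E α β δ (t+1) (n+1-k) + F α (n+1-k) :=
          ih (n+1-k) (c-k) (by omega)
        have hmul1 := mul_le_mul_of_nonneg_left hIH1 hβ0
        have hmul2 := mul_le_mul_of_nonneg_left hIH2 hβ0
        rw [mul_add] at hmul1 hmul2
        have hbf1 : β * F α n ≤ 1 * F α n := mul_le_mul_of_nonneg_right hβ1 (F_nonneg hα n)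
        have hbf2 : β * F α (n+1-k) ≤ 1 * F α (n+1-k) :=
          mul_le_mul_of_nonneg_right hβ1 (F_nonneg hα (n+1-k))
        rw [V_eq2, V_eq2, if_pos (show 1 ≤ n+1 by omega)]
        simp only [Nat.add_sub_cancel]
        have h3 := le_max_left (δ + β * V k E α β δ (t+1) n)
          (E + β * V k E α β δ (t+1) (n+1-k))
        have h4 := le_max_right (δ + β * V k E α β δ (t+1) n)
          (E + β * V k E α β δ (t+1) (n+1-k))
        have hind : (if 1 ≤ c then E else 0) ≤ E := by split <;> linarith
        apply max_le
        · linarith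
        · linarith

lemma g_eq2 (k : ℕ) (E α β δ : ℝ) (t b : ℕ) :
    g k E α β δ (t+2) b = δ + β * V k E α β δ (t + 1) (b - 1) - (if 1 ≤ b then E else 0)
        - β * V k E α β δ (t + 1) (b - k) := rfl

lemma g_eq1 (k : ℕ) (E α β δ : ℝ) (b : ℕ) :
    g k E α β δ 1 (b+1) = δ - F α b - E + F α (b + 1 - k) := rfl

lemma g_neg (k : ℕ) (hk : 1 ≤ k) (E α β : ℝ) (hα : 0 ≤ α)
    (hβ0 : 0 < β) (hβ1 : β < 1) (δ : ℝ) (hδ : δ < E) :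
    ∀ t n : ℕ, g k E α β δ (t+1) (n+1) < 0 := by
  intro t n
  cases t with
  | zero =>
    rw [g_eq1]
    have h1 : F α (n+1-k) ≤ F α n := F_mono hα (by omega)
    linarith
  | succ s =>
    rw [g_eq2, if_pos (show 1 ≤ n+1 by omega)]
    simp only [Nat.add_sub_cancel]
    have hgap : V k E α β δ (s+1) n ≤ V k E α β δ (s+1) (n+1-k) + (E - δ) :=
      V_gap k E α β δ hα hβ0.le hβ1.le hδ.le (s+1) n (n+1-k) (by omega) (by omega)
    have hmul := mul_le_mul_of_nonneg_left hgap hβ0.le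
    rw [mul_add] at hmul
    have hbe : β * (E - δ) < 1 * (E - δ) := mul_lt_mul_of_pos_right hβ1 (by linarith)
    linarith

lemma g_nonneg_at (k : ℕ) (hk : 1 ≤ k) (E α β : ℝ) (hE : 0 ≤ E) (hα : 0 ≤ α)
    (hβ0 : 0 ≤ β) (hβ1 : β ≤ 1) :
    ∀ t n : ℕ, 0 ≤ g k E α β (E + F α (n+1)) (t+1) (n+1) := by
  intro t n
  cases t with
  | zero =>
    rw [g_eq1]
    have h1 : F α n ≤ F α (n+1) := F_mono hα (by omega)
    have h2 := F_nonneg hα (n+1-k)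
    linarith
  | succ s =>
    rw [g_eq2, if_pos (show 1 ≤ n+1 by omega)]
    simp only [Nat.add_sub_cancel]
    have hdown : V k E α β (E + F α (n+1)) (s+1) (n+1-k)
        ≤ V k E α β (E + F α (n+1)) (s+1) n + F α n :=
      V_down k E α β (E + F α (n+1)) hE hα hβ0 hβ1 (s+1) n (n+1-k) (by omega)
    have hmul := mul_le_mul_of_nonneg_left hdown hβ0
    rw [mul_add] at hmul
    have hbf : β * F α n ≤ 1 * F α n := mul_le_mul_of_nonneg_right hβ1 (F_nonneg hα n)
    have h1 : F α n ≤ F α (n+1) := F_mono hα (by omega)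
    linarith

theorem whittle_busy_lower_bound (k : ℕ) (hk : 1 ≤ k) (E α β : ℝ) (hE : 0 ≤ E) (hα : 0 < α)
    (hβ0 : 0 < β) (hβ1 : β < 1)
    (τ b : ℕ) (hτ : 1 ≤ τ) (hb : 1 ≤ b) :
    E ≤ whittle k E α β τ b ∧
    ∀ δ : ℝ, δ < E → g k E α β δ τ b < 0 := by
  obtain ⟨t, rfl⟩ : ∃ t, τ = t + 1 := ⟨τ - 1, by omega⟩
  obtain ⟨n, rfl⟩ : ∃ n, b = n + 1 := ⟨b - 1, by omega⟩
  have hneg : ∀ δ : ℝ, δ < E → g k E α β δ (t+1) (n+1) < 0 :=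
    fun δ hδ => g_neg k hk E α β hα.le hβ0 hβ1 δ hδ t n
  refine ⟨?_, hneg⟩
  apply le_csInf
  · exact ⟨E + F α (n+1), g_nonneg_at k hk E α β hE hα.le hβ0.le hβ1.le t n⟩
  · intro x hx
    by_contra h
    exact absurd hx (not_le.mpr (hneg x (not_le.mp h)))
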